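/- arXiv:math/0610485 — 2 statements merged into one kernel-verified Lean document; each statement's English description precedes it below -/
import Mathlib

section
/- For all f, g in L²(E,μ;ℝ), the covariance identity 𝔼_ℙ[ν(f)·ν(g)] = ⟪f, g⟫_{L²(μ)} holds. -/
open MeasureTheory ProbabilityTheory Filter Real Set
open scoped NNReal ENNReal

lemma gpdf_eq (x : ℝ) :
    gaussianPDFReal 0 1 x = (Real.sqrt (2 * π))⁻¹ * Real.exp (-(1/2) * x ^ 2) := by
  simp only [gaussianPDFReal, NNReal.coe_one, mul_one, sub_zero]
  congr 1
  ring

lemma integral_sq_exp_neg_half_sq :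
    ∫ x : ℝ, x ^ 2 * Real.exp (-(1/2) * x ^ 2) = Real.sqrt 2 * Real.sqrt π := by
  have habs : (fun x : ℝ => x ^ 2 * Real.exp (-(1/2) * x ^ 2))
      = fun x : ℝ => |x| ^ 2 * Real.exp (-(1/2) * |x| ^ 2) := by
    funext x; rw [sq_abs]
  rw [habs, integral_comp_abs (f := fun x : ℝ => x ^ 2 * Real.exp (-(1/2) * x ^ 2))]
  have hconv : ∫ x in Ioi (0:ℝ), x ^ 2 * Real.exp (-(1/2) * x ^ 2)
      = ∫ x in Ioi (0:ℝ), x ^ ((2:ℕ):ℝ) * Real.exp (-(1/2) * x ^ ((2:ℕ):ℝ)) := by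
    refine setIntegral_congr_fun measurableSet_Ioi (fun x _ => ?_)
    rw [Real.rpow_natCast]
  rw [hconv, integral_rpow_mul_exp_neg_mul_rpow (by norm_num) (by norm_num) (by norm_num)]
  have h32 : ((((2:ℕ):ℝ)) + 1) / ((2:ℕ):ℝ) = 1/2 + 1 := by norm_num
  rw [h32, Real.Gamma_add_one (by norm_num), Real.Gamma_one_half_eq]
  have hb : ((1:ℝ)/2) ^ (-(((2:ℕ):ℝ) + 1) / ((2:ℕ):ℝ)) = 2 * Real.sqrt 2 := by
    rw [show (-(((2:ℕ):ℝ) + 1) / ((2:ℕ):ℝ)) = -(3/2 : ℝ) by norm_num, one_div,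
      Real.inv_rpow (by norm_num : (0:ℝ) ≤ 2), Real.rpow_neg (by norm_num : (0:ℝ) ≤ 2),
      inv_inv, show (3/2 : ℝ) = 1 + 1/2 by norm_num,
      Real.rpow_add (by norm_num : (0:ℝ) < 2), Real.rpow_one, ← Real.sqrt_eq_rpow]
  rw [hb]
  ring

lemma gaussianReal_eq :
    gaussianReal 0 1 = (volume : Measure ℝ).withDensity
      (fun x => ((Real.toNNReal (gaussianPDFReal 0 1 x) : ℝ≥0) : ℝ≥0∞)) := by
  rw [gaussianReal_of_var_ne_zero 0 one_ne_zero]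
  rfl

lemma meas_toNNReal_gpdf : Measurable (fun x => Real.toNNReal (gaussianPDFReal 0 1 x)) :=
  (measurable_gaussianPDFReal 0 1).real_toNNReal

lemma integral_gaussianReal_eq (h : ℝ → ℝ) :
    ∫ x, h x ∂(gaussianReal 0 1) = ∫ x, gaussianPDFReal 0 1 x * h x := by
  rw [gaussianReal_eq, integral_withDensity_eq_integral_smul meas_toNNReal_gpdf]
  congr 1
  funext x
  rw [NNReal.smul_def, smul_eq_mul, Real.coe_toNNReal _ (gaussianPDFReal_nonneg 0 1 x)]

lemma integrable_gpdf_mul_sq :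
    Integrable (fun x : ℝ => gaussianPDFReal 0 1 x * x ^ 2) := by
  have h : Integrable (fun x : ℝ => x ^ ((2:ℕ):ℝ) * Real.exp (-(1/2 : ℝ) * x ^ 2)) :=
    integrable_rpow_mul_exp_neg_mul_sq (by norm_num) (by norm_num)
  have h2 : Integrable (fun x : ℝ => x ^ 2 * Real.exp (-(1/2 : ℝ) * x ^ 2)) := by
    refine h.congr (ae_of_all _ fun x => ?_)
    simp only [Real.rpow_natCast]
  have := h2.const_mul (Real.sqrt (2 * π))⁻¹
  refine this.congr (ae_of_all _ fun x => ?_)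
  simp only [gpdf_eq]
  ring

lemma gaussianReal_mean : ∫ x : ℝ, x ∂(gaussianReal 0 1) = 0 := by
  rw [integral_gaussianReal_eq]
  have A := (Measure.measurePreserving_neg (volume : Measure ℝ)).integral_comp
    (Homeomorph.neg ℝ).measurableEmbedding (fun x => gaussianPDFReal 0 1 x * x)
  have hodd : ∀ x : ℝ, gaussianPDFReal 0 1 (-x) * (-x) = -(gaussianPDFReal 0 1 x * x) := by
    intro x
    rw [gpdf_eq, gpdf_eq, neg_sq]
    ring
  simp only [hodd] at A
  rw [integral_neg] at A
  linarith

lemma gaussianReal_sq : ∫ x : ℝ, x ^ 2 ∂(gaussianReal 0 1) = 1 := by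
  rw [integral_gaussianReal_eq]
  have : ∫ x : ℝ, gaussianPDFReal 0 1 x * x ^ 2
      = (Real.sqrt (2 * π))⁻¹ * ∫ x : ℝ, x ^ 2 * Real.exp (-(1/2 : ℝ) * x ^ 2) := by
    rw [← integral_const_mul]
    congr 1; funext x; rw [gpdf_eq]; ring
  rw [this, integral_sq_exp_neg_half_sq, Real.sqrt_mul (by norm_num : (0:ℝ) ≤ 2)]
  rw [inv_mul_cancel₀]
  positivity

lemma memLp_two_gaussianReal : MemLp (id : ℝ → ℝ) 2 (gaussianReal 0 1) := by
  rw [memLp_two_iff_integrable_sq aestronglyMeasurable_id]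
  rw [gaussianReal_eq, integrable_withDensity_iff_integrable_smul meas_toNNReal_gpdf]
  refine integrable_gpdf_mul_sq.congr (ae_of_all _ fun x => ?_)
  simp only [NNReal.smul_def, smul_eq_mul, Real.coe_toNNReal _ (gaussianPDFReal_nonneg 0 1 x), id]


/-- Covariance identity: `𝔼[ν f · ν g] = ⟪f, g⟫_{L²(μ)}`. -/
theorem white_noise_covariance
    {E : Type*} [MeasurableSpace E] (μ : Measure E) [IsFiniteMeasure μ]
    {Ω : Type*} [MeasurableSpace Ω] (P : Measure Ω) [IsProbabilityMeasure P]
    (ξ : HilbertBasis ℕ ℝ (Lp ℝ 2 μ))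
    (g : ℕ → Ω → ℝ) (hg_meas : ∀ n, Measurable (g n))
    (hg_indep : iIndepFun g P)
    (hg_law : ∀ n, Measure.map (g n) P = gaussianReal 0 1)
    (ν : Lp ℝ 2 μ → Ω → ℝ)
    (hν : ∀ f : Lp ℝ 2 μ, MemLp (ν f) 2 P ∧
      Tendsto
        (fun N => eLpNorm
          (fun ω => (∑ n ∈ Finset.range N, (inner ℝ f (ξ n) : ℝ) * g n ω) - ν f ω) 2 P)
        atTop (nhds 0))
    (f f' : Lp ℝ 2 μ) :
    ∫ ω, ν f ω * ν f' ω ∂P = (inner ℝ f f' : ℝ) := by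
  classical
  -- moments of the gaussians
  have hg2 : ∀ n, MemLp (g n) 2 P := by
    intro n
    have h := (memLp_map_measure_iff (μ := P) (p := (2:ℝ≥0∞)) (f := g n) (g := (id : ℝ → ℝ))
      aestronglyMeasurable_id (hg_meas n).aemeasurable)
    rw [hg_law n] at h
    simpa [Function.comp] using h.mp memLp_two_gaussianReal
  have hmean : ∀ n, ∫ ω, g n ω ∂P = 0 := by
    intro n
    have h := integral_map (μ := P) (hg_meas n).aemeasurable
      (f := fun x : ℝ => x) aestronglyMeasurable_id
    rw [hg_law n] at h
    rw [← h]
    exact gaussianReal_mean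
  have hsq : ∀ n, ∫ ω, g n ω * g n ω ∂P = 1 := by
    intro n
    have h := integral_map (μ := P) (hg_meas n).aemeasurable
      (f := fun x : ℝ => x * x)
      ((measurable_id.mul measurable_id).aestronglyMeasurable)
    rw [hg_law n] at h
    rw [← h]
    have := gaussianReal_sq
    simpa [sq] using this
  have hint : ∀ n, Integrable (g n) P := fun n => (hg2 n).integrable one_le_two
  have hprod : ∀ n m, Integrable (fun ω => g n ω * g m ω) P := by
    intro n m
    have h : MemLp ((g n) • (g m)) 1 P := by
      exact (hg2 m).smul (hg2 n)
    rw [memLp_one_iff_integrable] at h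
    exact h.congr (ae_of_all _ fun ω => by simp [smul_eq_mul])
  have hcov : ∀ n m, ∫ ω, g n ω * g m ω ∂P = if n = m then 1 else 0 := by
    intro n m
    by_cases hnm : n = m
    · subst hnm; simp [hsq n]
    · have h := IndepFun.integral_mul_eq_mul_integral (hg_indep.indepFun hnm) (hint n).1 (hint m).1
      simp only [if_neg hnm]
      have : ∫ ω, g n ω * g m ω ∂P = ∫ ω, (g n * g m) ω ∂P := by rfl
      rw [this, h, hmean n, zero_mul]
  -- notation
  set c : ℕ → ℝ := fun n => (inner ℝ f (ξ n) : ℝ) with hc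
  set d : ℕ → ℝ := fun n => (inner ℝ f' (ξ n) : ℝ) with hd
  set S : ℕ → Ω → ℝ := fun N ω => ∑ n ∈ Finset.range N, c n * g n ω with hS
  set T : ℕ → Ω → ℝ := fun N ω => ∑ n ∈ Finset.range N, d n * g n ω with hT
  have hSmem : ∀ N, MemLp (S N) 2 P := fun N =>
    memLp_finset_sum _ (fun i _ => ((hg2 i).const_mul (c i)))
  have hTmem : ∀ N, MemLp (T N) 2 P := fun N =>
    memLp_finset_sum _ (fun i _ => ((hg2 i).const_mul (d i)))
  -- key computation
  have hkey : ∀ N, ∫ ω, S N ω * T N ω ∂P = ∑ n ∈ Finset.range N, c n * d n := by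
    intro N
    have expand : ∀ ω, S N ω * T N ω
        = ∑ n ∈ Finset.range N, ∑ m ∈ Finset.range N, (c n * d m) * (g n ω * g m ω) := by
      intro ω
      rw [hS, hT]
      rw [Finset.sum_mul_sum]
      refine Finset.sum_congr rfl fun n _ => Finset.sum_congr rfl fun m _ => by ring
    calc ∫ ω, S N ω * T N ω ∂P
        = ∫ ω, ∑ n ∈ Finset.range N, ∑ m ∈ Finset.range N,
            (c n * d m) * (g n ω * g m ω) ∂P := by
          exact integral_congr_ae (ae_of_all _ expand)
      _ = ∑ n ∈ Finset.range N, ∑ m ∈ Finset.range N,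
            (c n * d m) * ∫ ω, g n ω * g m ω ∂P := by
          rw [integral_finset_sum _ (fun n _ =>
            integrable_finset_sum _ (fun m _ => ((hprod n m).const_mul (c n * d m))))]
          refine Finset.sum_congr rfl fun n _ => ?_
          rw [integral_finset_sum _ (fun m _ => ((hprod n m).const_mul (c n * d m)))]
          exact Finset.sum_congr rfl fun m _ => integral_const_mul _ _
      _ = ∑ n ∈ Finset.range N, c n * d n := by
          refine Finset.sum_congr rfl fun n hn => ?_
          rw [Finset.sum_eq_single_of_mem n hn]
          · rw [hcov n n, if_pos rfl, mul_one]
          · intro m _ hmn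
            rw [hcov n m, if_neg (fun h => hmn h.symm), mul_zero]
  -- Lp convergence
  set F : Lp ℝ 2 P := (hν f).1.toLp (ν f) with hF
  set G : Lp ℝ 2 P := (hν f').1.toLp (ν f') with hG
  set SL : ℕ → Lp ℝ 2 P := fun N => (hSmem N).toLp (S N) with hSL
  set TL : ℕ → Lp ℝ 2 P := fun N => (hTmem N).toLp (T N) with hTL
  have hSconv : Tendsto SL atTop (nhds F) := by
    rw [tendsto_iff_dist_tendsto_zero]
    have hdist : ∀ N, dist (SL N) F = (eLpNorm (fun ω => S N ω - ν f ω) 2 P).toReal := by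
      intro N
      rw [dist_eq_norm, hSL, hF, ← MemLp.toLp_sub]
      exact Lp.norm_toLp _ _
    simp only [hdist]
    have h0 := (hν f).2
    have := (ENNReal.tendsto_toReal (by simp : (0:ℝ≥0∞) ≠ ⊤)).comp h0
    simpa [hS, hc, Function.comp_def] using this
  have hTconv : Tendsto TL atTop (nhds G) := by
    rw [tendsto_iff_dist_tendsto_zero]
    have hdist : ∀ N, dist (TL N) G = (eLpNorm (fun ω => T N ω - ν f' ω) 2 P).toReal := by
      intro N
      rw [dist_eq_norm, hTL, hG, ← MemLp.toLp_sub]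
      exact Lp.norm_toLp _ _
    simp only [hdist]
    have h0 := (hν f').2
    have := (ENNReal.tendsto_toReal (by simp : (0:ℝ≥0∞) ≠ ⊤)).comp h0
    simpa [hT, hd, Function.comp_def] using this
  have hinner : Tendsto (fun N => (inner ℝ (SL N) (TL N) : ℝ)) atTop
      (nhds (inner ℝ F G : ℝ)) := hSconv.inner hTconv
  -- identify inner products with integrals
  have hinner_eq : ∀ N, (inner ℝ (SL N) (TL N) : ℝ) = ∑ n ∈ Finset.range N, c n * d n := by
    intro N
    rw [MeasureTheory.L2.inner_def]
    rw [← hkey N]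
    refine integral_congr_ae ?_
    filter_upwards [(hSmem N).coeFn_toLp, (hTmem N).coeFn_toLp] with ω h1 h2
    simp [RCLike.inner_apply, h1, h2, hSL, hTL, mul_comm]
  have hFG : (inner ℝ F G : ℝ) = ∫ ω, ν f ω * ν f' ω ∂P := by
    rw [MeasureTheory.L2.inner_def]
    refine integral_congr_ae ?_
    filter_upwards [(hν f).1.coeFn_toLp, (hν f').1.coeFn_toLp] with ω h1 h2
    simp [RCLike.inner_apply, h1, h2, hF, hG, mul_comm]
  -- Parseval
  have hpar : Tendsto (fun N => ∑ n ∈ Finset.range N, c n * d n) atTop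
      (nhds (inner ℝ f f' : ℝ)) := by
    have h := (ξ.hasSum_inner_mul_inner f f').tendsto_sum_nat
    refine h.congr fun N => Finset.sum_congr rfl fun n _ => ?_
    show (inner ℝ f (ξ n) : ℝ) * inner ℝ (ξ n) f' = (inner ℝ f (ξ n) : ℝ) * inner ℝ f' (ξ n)
    rw [real_inner_comm (ξ n) f']
  simp only [hinner_eq] at hinner
  rw [← hFG]
  exact tendsto_nhds_unique hinner hpar
end

section
/- The set function A ↦ ν(1_A) is σ-additive in L²(Ω,ℙ): if (A_i)_{i∈ℕ} is a sequence of pairwise disjoint measurable subsets of E with union A, then the partial sums Σ_{i<n} ν(1_{A_i}) converge to ν(1_A) in L²(Ω,ℙ) as n → ∞. -/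
open MeasureTheory ProbabilityTheory Filter Real
open scoped ENNReal NNReal symmDiff

lemma gauss_integrable_sq : Integrable (fun x => x ^ 2) (gaussianReal 0 1) := by
  rw [gaussianReal_of_var_ne_zero _ one_ne_zero]
  have hmeas : Measurable fun x : ℝ => (gaussianPDFReal 0 1 x).toNNReal :=
    (measurable_gaussianPDFReal 0 1).real_toNNReal
  have : (gaussianPDF 0 1) = fun x => ((gaussianPDFReal 0 1 x).toNNReal : ℝ≥0∞) := rfl
  rw [this, integrable_withDensity_iff_integrable_smul hmeas]
  have h2 : Integrable (fun x : ℝ => x ^ (2:ℝ) * rexp (-(1/2) * x ^ 2)) ℙ :=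
    integrable_rpow_mul_exp_neg_mul_sq (by norm_num) (by norm_num)
  have h2' : Integrable (fun x : ℝ => (Real.sqrt (2*π))⁻¹ * (x ^ 2 * rexp (-(1/2) * x ^ 2))) ℙ := by
    refine (Integrable.const_mul ?_ _)
    convert h2 using 2 with x
    norm_num [Real.rpow_natCast]
  refine h2'.congr (ae_of_all _ fun x => ?_)
  simp only [NNReal.smul_def, smul_eq_mul, Real.coe_toNNReal _ (gaussianPDFReal_nonneg _ _ _)]
  simp only [gaussianPDFReal, NNReal.coe_one, mul_one, sub_zero]
  ring_nf

lemma gauss_integral_withDensity (f : ℝ → ℝ) :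
    ∫ x, f x ∂(gaussianReal 0 1) = ∫ x, gaussianPDFReal 0 1 x * f x := by
  rw [gaussianReal_of_var_ne_zero _ one_ne_zero]
  have hmeas : Measurable fun x : ℝ => (gaussianPDFReal 0 1 x).toNNReal :=
    (measurable_gaussianPDFReal 0 1).real_toNNReal
  have : (gaussianPDF 0 1) = fun x => ((gaussianPDFReal 0 1 x).toNNReal : ℝ≥0∞) := rfl
  rw [this, integral_withDensity_eq_integral_smul hmeas]
  refine integral_congr_ae (ae_of_all _ fun x => ?_)
  simp [NNReal.smul_def, Real.coe_toNNReal _ (gaussianPDFReal_nonneg _ _ _)]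

lemma gaussPDF_even (x : ℝ) : gaussianPDFReal 0 1 (-x) = gaussianPDFReal 0 1 x := by
  simp [gaussianPDFReal]

lemma gauss_integral_id : ∫ x, x ∂(gaussianReal 0 1) = 0 := by
  rw [gauss_integral_withDensity]
  have h := integral_neg_eq_self (fun x => gaussianPDFReal 0 1 x * x) (volume : Measure ℝ)
  simp only [gaussPDF_even, mul_neg, integral_neg] at h
  linarith

lemma indLp_congr_set {E : Type*} [MeasurableSpace E] {μ : Measure E} {s t : Set E}
    (h : s = t) (hs : MeasurableSet s) (hμs : μ s ≠ ⊤) (ht : MeasurableSet t) (hμt : μ t ≠ ⊤) :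
    indicatorConstLp 2 hs hμs (1:ℝ) = indicatorConstLp 2 ht hμt 1 := by subst h; rfl

/-- `A ↦ ν (1_A)` is `σ`-additive in `L²(Ω,P)`. -/
theorem white_noise_sigma_additive
    {E : Type*} [MeasurableSpace E] (μ : Measure E) [IsFiniteMeasure μ]
    {Ω : Type*} [MeasurableSpace Ω] (P : Measure Ω) [IsProbabilityMeasure P]
    (ξ : HilbertBasis ℕ ℝ (Lp ℝ 2 μ))
    (g : ℕ → Ω → ℝ) (hg_meas : ∀ n, Measurable (g n))
    (hg_indep : iIndepFun g P)
    (hg_law : ∀ n, Measure.map (g n) P = gaussianReal 0 1)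
    (ν : Lp ℝ 2 μ → Ω → ℝ)
    (hν : ∀ f : Lp ℝ 2 μ, MemLp (ν f) 2 P ∧
      Tendsto
        (fun N => eLpNorm
          (fun ω => (∑ n ∈ Finset.range N, (inner ℝ f (ξ n) : ℝ) * g n ω) - ν f ω) 2 P)
        atTop (nhds 0))
    (A : ℕ → Set E) (hA : ∀ i, MeasurableSet (A i))
    (hdisj : Pairwise (Function.onFun Disjoint A)) :
    Tendsto
      (fun n => eLpNorm
        (fun ω =>
          (∑ i ∈ Finset.range n,
            ν (indicatorConstLp 2 (hA i) (measure_ne_top μ (A i)) (1 : ℝ)) ω) -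
          ν (indicatorConstLp 2 (MeasurableSet.iUnion hA) (measure_ne_top μ (⋃ i, A i))
              (1 : ℝ)) ω) 2 P)
      atTop (nhds 0) := by
  classical
  set c : ℝ := ∫ x, x ^ 2 ∂(gaussianReal 0 1) with hc
  have hc0 : 0 ≤ c := integral_nonneg fun x => sq_nonneg x
  -- basic facts about the g n
  have hid2 : MemLp (fun x : ℝ => x) 2 (gaussianReal 0 1) :=
    (memLp_two_iff_integrable_sq measurable_id.aestronglyMeasurable).2 gauss_integrable_sq
  have hgmem : ∀ n, MemLp (g n) 2 P := by
    intro n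
    have h1 : MemLp (fun x : ℝ => x) 2 (Measure.map (g n) P) := (hg_law n).symm ▸ hid2
    exact (memLp_map_measure_iff measurable_id.aestronglyMeasurable
      (hg_meas n).aemeasurable).1 h1
  have hgint : ∀ n, Integrable (g n) P := fun n => (hgmem n).integrable (by norm_num)
  have hEg : ∀ n, ∫ ω, g n ω ∂P = 0 := by
    intro n
    have h1 := integral_map (μ := P) (φ := g n) (f := fun x : ℝ => x) (hg_meas n).aemeasurable
      measurable_id.aestronglyMeasurable
    rw [hg_law n, gauss_integral_id] at h1
    exact h1.symm
  have hEg2 : ∀ n, ∫ ω, g n ω ^ 2 ∂P = c := by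
    intro n
    have h1 := integral_map (μ := P) (φ := g n) (f := fun x : ℝ => x ^ 2) (hg_meas n).aemeasurable
      (measurable_id.pow_const 2).aestronglyMeasurable
    rw [hg_law n] at h1
    exact h1.symm
  have hmul_int : ∀ n m, Integrable (fun ω => g n ω * g m ω) P := by
    intro n m
    have h1 := MeasureTheory.L2.integrable_inner (𝕜 := ℝ) ((hgmem n).toLp (g n)) ((hgmem m).toLp (g m))
    refine h1.congr ?_
    filter_upwards [(hgmem n).coeFn_toLp, (hgmem m).coeFn_toLp] with ω h2 h3
    simp [RCLike.inner_apply, h2, h3, mul_comm]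
  have hEgg : ∀ n m, n ≠ m → ∫ ω, g n ω * g m ω ∂P = 0 := by
    intro n m hnm
    have h1 := (hg_indep.indepFun hnm).integral_mul_eq_mul_integral (hgint n).aestronglyMeasurable (hgint m).aestronglyMeasurable
    have h2 : ∫ ω, g n ω * g m ω ∂P = ∫ ω, (g n * g m) ω ∂P := rfl
    rw [h2, h1, hEg n, hEg m, zero_mul]
  -- MemLp of partial sums
  have hSmem : ∀ (h : Lp ℝ 2 μ) (N : ℕ),
      MemLp (fun ω => ∑ n ∈ Finset.range N, (inner ℝ h (ξ n) : ℝ) * g n ω) 2 P := by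
    intro h N
    exact memLp_finset_sum _ fun n _ => (hgmem n).const_mul _
  -- key L² bound on partial sums
  have hSbound : ∀ (h : Lp ℝ 2 μ) (N : ℕ),
      eLpNorm (fun ω => ∑ n ∈ Finset.range N, (inner ℝ h (ξ n) : ℝ) * g n ω) 2 P ≤
        ENNReal.ofReal (Real.sqrt c * ‖h‖) := by
    intro h N
    set a : ℕ → ℝ := fun n => (inner ℝ h (ξ n) : ℝ) with ha
    set S : Ω → ℝ := fun ω => ∑ n ∈ Finset.range N, a n * g n ω with hS
    have hint_sq : ∫ ω, S ω ^ 2 ∂P = (∑ n ∈ Finset.range N, a n ^ 2) * c := by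
      have expand : ∀ ω, S ω ^ 2 =
          ∑ n ∈ Finset.range N, ∑ m ∈ Finset.range N, (a n * a m) * (g n ω * g m ω) := by
        intro ω
        rw [hS, sq, Finset.sum_mul_sum]
        refine Finset.sum_congr rfl fun n _ => Finset.sum_congr rfl fun m _ => by ring
      simp_rw [expand]
      rw [integral_finset_sum _ (fun n _ =>
        integrable_finset_sum _ (fun m _ => (hmul_int n m).const_mul _))]
      have inner_sum : ∀ n ∈ Finset.range N,
          ∫ ω, ∑ m ∈ Finset.range N, (a n * a m) * (g n ω * g m ω) ∂P = a n ^ 2 * c := by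
        intro n hn
        rw [integral_finset_sum _ (fun m _ => (hmul_int n m).const_mul _)]
        rw [Finset.sum_eq_single_of_mem n hn]
        · rw [integral_const_mul]
          have : ∀ ω, g n ω * g n ω = g n ω ^ 2 := fun ω => (sq (g n ω)).symm
          simp_rw [this]
          rw [hEg2 n]; ring
        · intro m _ hmn
          rw [integral_const_mul, hEgg n m (Ne.symm hmn), mul_zero]
      rw [Finset.sum_congr rfl inner_sum, ← Finset.sum_mul]
    have hbessel : ∑ n ∈ Finset.range N, a n ^ 2 ≤ ‖h‖ ^ 2 := by
      have h1 := (ξ.orthonormal).sum_inner_products_le (𝕜 := ℝ) h (s := Finset.range N)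
      refine le_trans (le_of_eq (Finset.sum_congr rfl fun n _ => ?_)) h1
      rw [Real.norm_eq_abs, sq_abs, real_inner_comm]
    rw [(hSmem h N).eLpNorm_eq_integral_rpow_norm two_ne_zero ENNReal.ofNat_ne_top]
    apply ENNReal.ofReal_le_ofReal
    have htr : (2 : ℝ≥0∞).toReal = (2 : ℝ) := by norm_num
    rw [htr]
    have hnorm_sq : (∫ ω, ‖S ω‖ ^ (2:ℝ) ∂P) = ∫ ω, S ω ^ 2 ∂P := by
      refine integral_congr_ae (ae_of_all _ fun ω => ?_)
      show ‖S ω‖ ^ (2:ℝ) = S ω ^ 2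
      rw [← sq_abs (S ω), ← Real.norm_eq_abs]
      norm_num [Real.rpow_natCast]
    rw [hnorm_sq, hint_sq]
    have h2 : (∑ n ∈ Finset.range N, a n ^ 2) * c ≤ ‖h‖ ^ 2 * c :=
      mul_le_mul_of_nonneg_right hbessel hc0
    calc ((∑ n ∈ Finset.range N, a n ^ 2) * c) ^ (2:ℝ)⁻¹
        ≤ (‖h‖ ^ 2 * c) ^ (2:ℝ)⁻¹ := by
          refine Real.rpow_le_rpow ?_ h2 (by norm_num)
          exact mul_nonneg (Finset.sum_nonneg fun n _ => sq_nonneg _) hc0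
      _ = Real.sqrt c * ‖h‖ := by
          rw [show ((2:ℝ)⁻¹) = 1/2 by norm_num, ← Real.sqrt_eq_rpow,
            Real.sqrt_mul (sq_nonneg _), Real.sqrt_sq (norm_nonneg _), mul_comm]
  -- Lipschitz bound for ν
  have hM : ∀ f f' : Lp ℝ 2 μ,
      eLpNorm (fun ω => ν f ω - ν f' ω) 2 P ≤ ENNReal.ofReal (Real.sqrt c * ‖f - f'‖) := by
    intro f f'
    set S : Lp ℝ 2 μ → ℕ → Ω → ℝ :=
      fun h N ω => ∑ n ∈ Finset.range N, (inner ℝ h (ξ n) : ℝ) * g n ω with hSdef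
    have hkey : ∀ N : ℕ,
        eLpNorm (fun ω => ν f ω - ν f' ω) 2 P ≤
          ENNReal.ofReal (Real.sqrt c * ‖f - f'‖) +
          eLpNorm (fun ω => S f N ω - ν f ω) 2 P +
          eLpNorm (fun ω => S f' N ω - ν f' ω) 2 P := by
      intro N
      have hdecomp : (fun ω => ν f ω - ν f' ω) =
          fun ω => (S (f - f') N ω + (ν f ω - S f N ω)) + (S f' N ω - ν f' ω) := by
        funext ω
        have hsub : S (f - f') N ω = S f N ω - S f' N ω := by
          simp only [hSdef]
          rw [← Finset.sum_sub_distrib]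
          refine Finset.sum_congr rfl fun n _ => ?_
          rw [inner_sub_left]; ring
        rw [hsub]; ring
      rw [hdecomp]
      have h1 : AEStronglyMeasurable (fun ω => S (f - f') N ω) P :=
        (hSmem (f - f') N).aestronglyMeasurable
      have h2 : AEStronglyMeasurable (fun ω => ν f ω - S f N ω) P :=
        ((hν f).1.aestronglyMeasurable.sub (hSmem f N).aestronglyMeasurable)
      have h3 : AEStronglyMeasurable (fun ω => S f' N ω - ν f' ω) P :=
        ((hSmem f' N).aestronglyMeasurable.sub (hν f').1.aestronglyMeasurable)
      calc eLpNorm (fun ω => (S (f - f') N ω + (ν f ω - S f N ω)) + (S f' N ω - ν f' ω)) 2 P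
          ≤ eLpNorm (fun ω => S (f - f') N ω + (ν f ω - S f N ω)) 2 P +
            eLpNorm (fun ω => S f' N ω - ν f' ω) 2 P :=
            eLpNorm_add_le (h1.add h2) h3 (by norm_num)
        _ ≤ (eLpNorm (fun ω => S (f - f') N ω) 2 P +
              eLpNorm (fun ω => ν f ω - S f N ω) 2 P) +
            eLpNorm (fun ω => S f' N ω - ν f' ω) 2 P := by
            gcongr
            exact eLpNorm_add_le h1 h2 (by norm_num)
        _ ≤ (ENNReal.ofReal (Real.sqrt c * ‖f - f'‖) +
              eLpNorm (fun ω => S f N ω - ν f ω) 2 P) +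
            eLpNorm (fun ω => S f' N ω - ν f' ω) 2 P := by
            gcongr
            · exact hSbound (f - f') N
            · exact (eLpNorm_sub_comm _ _ _ _).le
    have hlim : Tendsto (fun N =>
        ENNReal.ofReal (Real.sqrt c * ‖f - f'‖) +
        eLpNorm (fun ω => S f N ω - ν f ω) 2 P +
        eLpNorm (fun ω => S f' N ω - ν f' ω) 2 P) atTop
        (nhds (ENNReal.ofReal (Real.sqrt c * ‖f - f'‖) + 0 + 0)) :=
      ((tendsto_const_nhds.add (hν f).2).add (hν f').2)
    rw [add_zero, add_zero] at hlim
    exact ge_of_tendsto hlim (Eventually.of_forall hkey)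
  -- ν 0 = 0 a.e.
  have hν0 : ν (0 : Lp ℝ 2 μ) =ᵐ[P] 0 := by
    have h1 := (hν 0).2
    have h2 : (fun N => eLpNorm
        (fun ω => (∑ n ∈ Finset.range N, (inner ℝ (0 : Lp ℝ 2 μ) (ξ n) : ℝ) * g n ω) - ν 0 ω) 2 P) =
        fun _ => eLpNorm ((0 : Ω → ℝ) - ν 0) 2 P := by
      funext N
      congr 1
      funext ω
      simp [Pi.sub_apply]
    rw [h2] at h1
    have h3 : eLpNorm ((0 : Ω → ℝ) - ν 0) 2 P = 0 := tendsto_nhds_unique tendsto_const_nhds h1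
    rw [eLpNorm_sub_comm, sub_zero] at h3
    exact (eLpNorm_eq_zero_iff (hν 0).1.aestronglyMeasurable two_ne_zero).1 h3
  -- additivity of ν a.e.
  have hadd : ∀ f f' : Lp ℝ 2 μ, ν (f + f') =ᵐ[P] fun ω => ν f ω + ν f' ω := by
    intro f f'
    have hkey : ∀ N : ℕ,
        eLpNorm (fun ω => ν (f + f') ω - (ν f ω + ν f' ω)) 2 P ≤
          eLpNorm (fun ω => (∑ n ∈ Finset.range N, (inner ℝ (f + f') (ξ n) : ℝ) * g n ω) - ν (f + f') ω) 2 P +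
          eLpNorm (fun ω => (∑ n ∈ Finset.range N, (inner ℝ f (ξ n) : ℝ) * g n ω) - ν f ω) 2 P +
          eLpNorm (fun ω => (∑ n ∈ Finset.range N, (inner ℝ f' (ξ n) : ℝ) * g n ω) - ν f' ω) 2 P := by
      intro N
      have hdecomp : (fun ω => ν (f + f') ω - (ν f ω + ν f' ω)) =
          fun ω => (((∑ n ∈ Finset.range N, (inner ℝ f (ξ n) : ℝ) * g n ω) - ν f ω) +
            ((∑ n ∈ Finset.range N, (inner ℝ f' (ξ n) : ℝ) * g n ω) - ν f' ω)) -
            ((∑ n ∈ Finset.range N, (inner ℝ (f + f') (ξ n) : ℝ) * g n ω) - ν (f + f') ω) := by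
        funext ω
        have hsum : (∑ n ∈ Finset.range N, (inner ℝ (f + f') (ξ n) : ℝ) * g n ω) =
            (∑ n ∈ Finset.range N, (inner ℝ f (ξ n) : ℝ) * g n ω) +
            (∑ n ∈ Finset.range N, (inner ℝ f' (ξ n) : ℝ) * g n ω) := by
          rw [← Finset.sum_add_distrib]
          refine Finset.sum_congr rfl fun n _ => ?_
          rw [inner_add_left]; ring
        rw [hsum]; ring
      rw [hdecomp]
      have h1 : AEStronglyMeasurable
          (fun ω => (∑ n ∈ Finset.range N, (inner ℝ (f + f') (ξ n) : ℝ) * g n ω) - ν (f + f') ω) P :=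
        (hSmem (f + f') N).aestronglyMeasurable.sub (hν (f + f')).1.aestronglyMeasurable
      have h2 : AEStronglyMeasurable
          (fun ω => (∑ n ∈ Finset.range N, (inner ℝ f (ξ n) : ℝ) * g n ω) - ν f ω) P :=
        (hSmem f N).aestronglyMeasurable.sub (hν f).1.aestronglyMeasurable
      have h3 : AEStronglyMeasurable
          (fun ω => (∑ n ∈ Finset.range N, (inner ℝ f' (ξ n) : ℝ) * g n ω) - ν f' ω) P :=
        (hSmem f' N).aestronglyMeasurable.sub (hν f').1.aestronglyMeasurable
      calc eLpNorm (fun ω => (((∑ n ∈ Finset.range N, (inner ℝ f (ξ n) : ℝ) * g n ω) - ν f ω) +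
            ((∑ n ∈ Finset.range N, (inner ℝ f' (ξ n) : ℝ) * g n ω) - ν f' ω)) -
            ((∑ n ∈ Finset.range N, (inner ℝ (f + f') (ξ n) : ℝ) * g n ω) - ν (f + f') ω)) 2 P
          ≤ eLpNorm (fun ω => ((∑ n ∈ Finset.range N, (inner ℝ f (ξ n) : ℝ) * g n ω) - ν f ω) +
              ((∑ n ∈ Finset.range N, (inner ℝ f' (ξ n) : ℝ) * g n ω) - ν f' ω)) 2 P +
            eLpNorm (fun ω => (∑ n ∈ Finset.range N, (inner ℝ (f + f') (ξ n) : ℝ) * g n ω) - ν (f + f') ω) 2 P :=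
            eLpNorm_sub_le (h2.add h3) h1 (by norm_num)
        _ ≤ (eLpNorm (fun ω => (∑ n ∈ Finset.range N, (inner ℝ f (ξ n) : ℝ) * g n ω) - ν f ω) 2 P +
              eLpNorm (fun ω => (∑ n ∈ Finset.range N, (inner ℝ f' (ξ n) : ℝ) * g n ω) - ν f' ω) 2 P) +
            eLpNorm (fun ω => (∑ n ∈ Finset.range N, (inner ℝ (f + f') (ξ n) : ℝ) * g n ω) - ν (f + f') ω) 2 P := by
            gcongr
            exact eLpNorm_add_le h2 h3 (by norm_num)
        _ = eLpNorm (fun ω => (∑ n ∈ Finset.range N, (inner ℝ (f + f') (ξ n) : ℝ) * g n ω) - ν (f + f') ω) 2 P +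
            eLpNorm (fun ω => (∑ n ∈ Finset.range N, (inner ℝ f (ξ n) : ℝ) * g n ω) - ν f ω) 2 P +
            eLpNorm (fun ω => (∑ n ∈ Finset.range N, (inner ℝ f' (ξ n) : ℝ) * g n ω) - ν f' ω) 2 P := by
            ring
    have hlim : Tendsto (fun N : ℕ =>
        eLpNorm (fun ω => (∑ n ∈ Finset.range N, (inner ℝ (f + f') (ξ n) : ℝ) * g n ω) - ν (f + f') ω) 2 P +
        eLpNorm (fun ω => (∑ n ∈ Finset.range N, (inner ℝ f (ξ n) : ℝ) * g n ω) - ν f ω) 2 P +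
        eLpNorm (fun ω => (∑ n ∈ Finset.range N, (inner ℝ f' (ξ n) : ℝ) * g n ω) - ν f' ω) 2 P) atTop
        (nhds (0 + 0 + 0)) :=
      (((hν (f + f')).2.add (hν f).2).add (hν f').2)
    rw [add_zero, add_zero] at hlim
    have hzero : eLpNorm (fun ω => ν (f + f') ω - (ν f ω + ν f' ω)) 2 P = 0 :=
      le_antisymm (ge_of_tendsto hlim (Eventually.of_forall hkey)) zero_le
    have hmeas' : AEStronglyMeasurable (fun ω => ν (f + f') ω - (ν f ω + ν f' ω)) P :=
      (hν (f + f')).1.aestronglyMeasurable.sub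
        ((hν f).1.aestronglyMeasurable.add (hν f').1.aestronglyMeasurable)
    have h4 := (eLpNorm_eq_zero_iff hmeas' two_ne_zero).1 hzero
    filter_upwards [h4] with ω hω
    have : ν (f + f') ω - (ν f ω + ν f' ω) = 0 := hω
    linarith
  -- finite additivity
  have hfin : ∀ (F : ℕ → Lp ℝ 2 μ) (n : ℕ),
      (fun ω => ∑ i ∈ Finset.range n, ν (F i) ω) =ᵐ[P] ν (∑ i ∈ Finset.range n, F i) := by
    intro F n
    induction n with
    | zero => simp only [Finset.range_zero, Finset.sum_empty]; exact hν0.symm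
    | succ n ih =>
      have h1 : ν (∑ i ∈ Finset.range (n+1), F i) =ᵐ[P]
          fun ω => ν (∑ i ∈ Finset.range n, F i) ω + ν (F n) ω := by
        rw [Finset.sum_range_succ]
        exact hadd _ _
      refine EventuallyEq.trans ?_ h1.symm
      filter_upwards [ih] with ω hω
      rw [Finset.sum_range_succ, hω]
  -- sets B n
  set B : ℕ → Set E := fun n => ⋃ i ∈ Finset.range n, A i with hB
  have hBmeas : ∀ n, MeasurableSet (B n) := fun n =>
    MeasurableSet.biUnion (Finset.range n).countable_toSet fun i _ => hA i
  have hBsub : ∀ n, B n ⊆ ⋃ i, A i := fun n =>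
    Set.iUnion₂_subset fun i _ => Set.subset_iUnion A i
  -- indicator of B n equals the sum of indicators
  have hind : ∀ n : ℕ,
      indicatorConstLp 2 (hBmeas n) (measure_ne_top μ (B n)) (1:ℝ) =
        ∑ i ∈ Finset.range n, indicatorConstLp 2 (hA i) (measure_ne_top μ (A i)) (1:ℝ) := by
    intro n
    induction n with
    | zero =>
      rw [Finset.sum_range_zero]
      rw [indLp_congr_set (show B 0 = (∅ : Set E) by simp [hB]) _ _ MeasurableSet.empty (by simp)]
      simp
    | succ n ih =>
      have hset : B (n+1) = B n ∪ A n := by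
        simp only [hB, Finset.range_add_one, Finset.set_biUnion_insert]
        exact Set.union_comm _ _
      have hdisjBn : Disjoint (B n) (A n) := by
        refine Set.disjoint_left.2 fun x hx hx' => ?_
        obtain ⟨i, hi, hxi⟩ : ∃ i, i < n ∧ x ∈ A i := by
          simpa [hB, Set.mem_iUnion] using hx
        exact Set.disjoint_left.1 (hdisj (Nat.ne_of_lt hi)) hxi hx'
      rw [indLp_congr_set hset _ _ ((hBmeas n).union (hA n))
        (measure_ne_top μ _),
        indicatorConstLp_disjoint_union (hBmeas n) (hA n) (measure_ne_top μ _)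
          (measure_ne_top μ _) hdisjBn, ih, Finset.sum_range_succ]
  -- convergence of indicators in Lp
  have hBtend : Tendsto (fun n => μ ((B n) ∆ (⋃ i, A i))) atTop (nhds 0) := by
    have hsymm : ∀ n, (B n) ∆ (⋃ i, A i) = (⋃ i, A i) \ B n := by
      intro n
      rw [Set.symmDiff_def]
      rw [Set.diff_eq_empty.2 (hBsub n), Set.empty_union]
    simp_rw [hsymm]
    have hmono : Monotone B := by
      intro a b hab x hx
      obtain ⟨i, hi, hxi⟩ : ∃ i, i < a ∧ x ∈ A i := by simpa [hB, Set.mem_iUnion] using hx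
      have hx2 : x ∈ ⋃ j ∈ Finset.range b, A j :=
        Set.mem_iUnion.2 ⟨i, Set.mem_iUnion.2 ⟨Finset.mem_range.2 (lt_of_lt_of_le hi hab), hxi⟩⟩
      simpa [hB] using hx2
    have hunion : ⋃ n, B n = ⋃ i, A i := by
      apply Set.Subset.antisymm
      · exact Set.iUnion_subset hBsub
      · refine Set.iUnion_subset fun i => Set.subset_iUnion_of_subset (i+1) fun x hx => ?_
        have hx2 : x ∈ ⋃ j ∈ Finset.range (i+1), A j :=
          Set.mem_iUnion.2 ⟨i, Set.mem_iUnion.2 ⟨Finset.mem_range.2 (Nat.lt_succ_self i), hx⟩⟩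
        simpa [hB] using hx2
    have h1 : Tendsto (fun n => μ (B n)) atTop (nhds (μ (⋃ i, A i))) := by
      rw [← hunion]
      exact tendsto_measure_iUnion_atTop hmono
    have h2 : ∀ n, μ ((⋃ i, A i) \ B n) = μ (⋃ i, A i) - μ (B n) := fun n =>
      measure_diff (hBsub n) (hBmeas n).nullMeasurableSet (measure_ne_top μ _)
    simp_rw [h2]
    have h3 := ENNReal.Tendsto.sub (tendsto_const_nhds (x := μ (⋃ i, A i))) h1
      (Or.inl (measure_ne_top μ _))
    simpa using h3
  have hLpTend : Tendsto (fun n : ℕ =>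
      ‖(∑ i ∈ Finset.range n, indicatorConstLp 2 (hA i) (measure_ne_top μ (A i)) (1:ℝ)) -
        indicatorConstLp 2 (MeasurableSet.iUnion hA) (measure_ne_top μ (⋃ i, A i)) (1:ℝ)‖)
      atTop (nhds 0) := by
    have h1 : Tendsto (fun n => indicatorConstLp 2 (hBmeas n) (measure_ne_top μ (B n)) (1:ℝ))
        atTop (nhds (indicatorConstLp 2 (MeasurableSet.iUnion hA)
          (measure_ne_top μ (⋃ i, A i)) (1:ℝ))) :=
      tendsto_indicatorConstLp_set ENNReal.ofNat_ne_top hBtend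
    have h2 := (tendsto_iff_dist_tendsto_zero).1 h1
    simp_rw [dist_eq_norm, hind] at h2
    exact h2
  -- conclude
  set fA := indicatorConstLp 2 (MeasurableSet.iUnion hA) (measure_ne_top μ (⋃ i, A i)) (1:ℝ)
  set fI : ℕ → Lp ℝ 2 μ := fun i => indicatorConstLp 2 (hA i) (measure_ne_top μ (A i)) (1:ℝ)
  have hle : ∀ n : ℕ,
      eLpNorm (fun ω => (∑ i ∈ Finset.range n, ν (fI i) ω) - ν fA ω) 2 P ≤
        ENNReal.ofReal (Real.sqrt c * ‖(∑ i ∈ Finset.range n, fI i) - fA‖) := by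
    intro n
    have hcongr : (fun ω => (∑ i ∈ Finset.range n, ν (fI i) ω) - ν fA ω) =ᵐ[P]
        fun ω => ν (∑ i ∈ Finset.range n, fI i) ω - ν fA ω := by
      filter_upwards [hfin fI n] with ω hω
      rw [hω]
    rw [eLpNorm_congr_ae hcongr]
    exact hM _ _
  have hupper : Tendsto (fun n : ℕ =>
      ENNReal.ofReal (Real.sqrt c * ‖(∑ i ∈ Finset.range n, fI i) - fA‖)) atTop (nhds 0) := by
    have h1 : Tendsto (fun n : ℕ => Real.sqrt c * ‖(∑ i ∈ Finset.range n, fI i) - fA‖)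
        atTop (nhds (Real.sqrt c * 0)) := hLpTend.const_mul _
    rw [mul_zero] at h1
    have h2 := ENNReal.tendsto_ofReal h1
    simpa using h2
  exact tendsto_of_tendsto_of_tendsto_of_le_of_le tendsto_const_nhds hupper
    (fun n => zero_le) hle
end
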